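/- arXiv:1404.3745 — 2 statements merged into one kernel-verified Lean document; each statement's English description precedes it below -/
import Mathlib

section
/- The equation 2ψ(2p) + ψ(1-4p) = ψ(1-2p) + 2ψ(p), where ψ(x) = -x log x, has a unique solution p in the open interval (0, 1/4). -/
noncomputable def ψ (x : ℝ) : ℝ := -x * Real.log x

open Real Set

lemma psi_eq : ψ = Real.negMulLog := rfl

noncomputable def fψ (p : ℝ) : ℝ := 2 * ψ (2*p) + ψ (1 - 4*p) - ψ (1 - 2*p) - 2 * ψ p

lemma cont_fψ : Continuous fψ := by
  unfold fψ
  rw [psi_eq]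
  fun_prop

lemma fψ_expand {p : ℝ} (hp : 0 < p) :
    fψ p = -(4*p) * Real.log 2 - (2*p) * Real.log p
      - (1-4*p) * Real.log (1-4*p) + (1-2*p) * Real.log (1-2*p) := by
  unfold fψ ψ
  rw [Real.log_mul (by norm_num) (ne_of_gt hp)]
  ring

lemma fψ_pos {p : ℝ} (h0 : 0 < p) (h1 : p ≤ 1/8) : 0 < fψ p := by
  have e := fψ_expand h0
  have l4 : Real.log (4*p) = 2 * Real.log 2 + Real.log p := by
    rw [show (4:ℝ)*p = 2*(2*p) by ring, Real.log_mul (by norm_num) (by positivity),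
      Real.log_mul (by norm_num) (ne_of_gt h0)]
    ring
  have k1 : Real.log (1-4*p) < Real.log (1-2*p) :=
    Real.log_lt_log (by linarith) (by linarith)
  have k2 : Real.log (4*p) ≤ Real.log (1-4*p) :=
    Real.log_le_log (by positivity) (by linarith)
  nlinarith [mul_le_mul_of_nonneg_left k2 (by linarith : (0:ℝ) ≤ 2*p),
    mul_lt_mul_of_pos_left k1 (by linarith : (0:ℝ) < 1-2*p)]

lemma log4 : Real.log 4 = 2 * Real.log 2 := by
  rw [show (4:ℝ) = 2^2 by norm_num, Real.log_pow]; push_cast; ring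

lemma fψ_quarter : fψ (1/4) = -(1/2) * Real.log 2 := by
  unfold fψ ψ
  norm_num
  rw [show Real.log (1/2:ℝ) = -Real.log 2 by rw [one_div, Real.log_inv],
    show Real.log (1/4:ℝ) = -(2*Real.log 2) by rw [one_div, Real.log_inv, log4]]
  ring

lemma fψ_deriv {p : ℝ} (hp : p ∈ Ioo (0:ℝ) (1/4)) :
    HasDerivAt fψ (-4*Real.log 2 - 2*Real.log p + 4*Real.log (1-4*p)
      - 2*Real.log (1-2*p)) p := by
  obtain ⟨h0, h4⟩ := hp
  have h2p : (2:ℝ)*p ≠ 0 := by positivity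
  have h14 : (1:ℝ)-4*p ≠ 0 := by intro h; nlinarith
  have h12 : (1:ℝ)-2*p ≠ 0 := by intro h; nlinarith
  have d1 : HasDerivAt (fun p : ℝ => 2*p) 2 p := by
    simpa using (hasDerivAt_id p).const_mul (2:ℝ)
  have d2 : HasDerivAt (fun p : ℝ => 1-4*p) (-4) p := by
    simpa using ((hasDerivAt_id p).const_mul (4:ℝ)).const_sub 1
  have d3 : HasDerivAt (fun p : ℝ => 1-2*p) (-2) p := by
    simpa using ((hasDerivAt_id p).const_mul (2:ℝ)).const_sub 1
  have H1 : HasDerivAt (fun q : ℝ => Real.negMulLog (2*q))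
      ((-Real.log (2*p) - 1) * 2) p := (Real.hasDerivAt_negMulLog h2p).comp p d1
  have H2 : HasDerivAt (fun q : ℝ => Real.negMulLog (1-4*q))
      ((-Real.log (1-4*p) - 1) * (-4)) p := by
      have h := (Real.hasDerivAt_negMulLog h14).comp p d2; exact h
  have H3 : HasDerivAt (fun q : ℝ => Real.negMulLog (1-2*q))
      ((-Real.log (1-2*p) - 1) * (-2)) p := by
      have h := (Real.hasDerivAt_negMulLog h12).comp p d3; exact h
  have H4 : HasDerivAt Real.negMulLog (-Real.log p - 1) p :=
    Real.hasDerivAt_negMulLog (ne_of_gt h0)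
  have := (((H1.const_mul 2).add H2).sub H3).sub (H4.const_mul 2)
  have e : fψ = fun q => 2 * Real.negMulLog (2*q) + Real.negMulLog (1-4*q)
      - Real.negMulLog (1-2*q) - 2 * Real.negMulLog q := by
    funext q; simp [fψ, psi_eq]
  rw [e]
  refine HasDerivAt.congr_deriv this ?_
  rw [Real.log_mul (by norm_num) (ne_of_gt h0)]
  ring

lemma fψ_anti : StrictAntiOn fψ (Icc (1/8 : ℝ) (1/4)) := by
  apply strictAntiOn_of_deriv_neg (convex_Icc _ _) cont_fψ.continuousOn
  intro x hx
  rw [interior_Icc] at hx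
  obtain ⟨h8, h4⟩ := hx
  have hx' : x ∈ Ioo (0:ℝ) (1/4) := ⟨by linarith, h4⟩
  rw [(fψ_deriv hx').deriv]
  have l8 : Real.log (1/8 : ℝ) = -(3 * Real.log 2) := by
    rw [show (1/8:ℝ) = ((2:ℝ)^3)⁻¹ by norm_num, Real.log_inv, Real.log_pow]
    push_cast; ring
  have l2 : Real.log (1/2 : ℝ) = -Real.log 2 := by
    rw [one_div, Real.log_inv]
  have a1 : Real.log (1/8 : ℝ) < Real.log x := Real.log_lt_log (by norm_num) h8
  have a2 : Real.log (1-4*x) < Real.log (1/2 : ℝ) :=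
    Real.log_lt_log (by linarith) (by linarith)
  have a3 : Real.log (1/2 : ℝ) < Real.log (1-2*x) :=
    Real.log_lt_log (by norm_num) (by linarith)
  rw [l8] at a1
  rw [l2] at a2 a3
  linarith

lemma fψ_root_gt {p : ℝ} (h0 : 0 < p) (hr : fψ p = 0) : 1/8 < p := by
  by_contra h
  push_neg at h
  exact absurd hr (ne_of_gt (fψ_pos h0 h))

theorem unique_solution_quarter :
    ∃! p : ℝ, p ∈ Set.Ioo (0 : ℝ) (1/4) ∧
      2 * ψ (2*p) + ψ (1 - 4*p) = ψ (1 - 2*p) + 2 * ψ p := by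
  have hneg : fψ (1/4) < 0 := by
    rw [fψ_quarter]
    have := Real.log_pos (by norm_num : (1:ℝ) < 2)
    linarith
  have hpos : 0 < fψ (1/16) := fψ_pos (by norm_num) (by norm_num)
  have hmem : (0:ℝ) ∈ Ioo (fψ (1/4)) (fψ (1/16)) := ⟨hneg, hpos⟩
  obtain ⟨c, hc, hc0⟩ := intermediate_value_Ioo' (by norm_num : (1/16:ℝ) ≤ 1/4)
    cont_fψ.continuousOn hmem
  have hc4 : c < 1/4 := hc.2
  have hc0' : 0 < c := by linarith [hc.1]
  refine ⟨c, ⟨⟨hc0', hc4⟩, by unfold fψ at hc0; linarith⟩, ?_⟩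
  rintro q ⟨⟨hq0, hq4⟩, heq⟩
  have hqr : fψ q = 0 := by unfold fψ; linarith
  have hq8 := fψ_root_gt hq0 hqr
  have hc8 := fψ_root_gt hc0' hc0
  exact fψ_anti.injOn ⟨le_of_lt hq8, le_of_lt hq4⟩ ⟨le_of_lt hc8, le_of_lt hc4⟩
    (by rw [hqr, hc0])
end

section
/- There exist a finite set G ⊂ ℝ² on which π_{-1} is injective and a non-uniform probability measure P on G with H(P)/max(H(π₀P),H(π₁P),H(π_∞P)) > H(U)/max(H(π₀U),H(π₁U),H(π_∞U)) for U the uniform measure on the same G. -/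
open Finset
open scoped Classical

noncomputable def pushEnt (G : Finset (ℝ × ℝ)) (P : ℝ × ℝ → ℝ) (π : ℝ × ℝ → ℝ) : ℝ :=
  -∑ ν ∈ G.image π, (∑ g ∈ G.filter (fun g => π g = ν), P g) *
      Real.log (∑ g ∈ G.filter (fun g => π g = ν), P g)

noncomputable def ent (G : Finset (ℝ × ℝ)) (P : ℝ × ℝ → ℝ) : ℝ :=
  -∑ g ∈ G, P g * Real.log (P g)

def π₀ : ℝ × ℝ → ℝ := fun x => x.1
def π₁ : ℝ × ℝ → ℝ := fun x => x.1 + x.2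
def π₂ : ℝ × ℝ → ℝ := fun x => x.1 + 2 * x.2
def πinf : ℝ × ℝ → ℝ := fun x => x.2

noncomputable def Gw : Finset (ℝ × ℝ) := {(0,1),(1,0),(1,1),(2,0)}
noncomputable def Pw : ℝ × ℝ → ℝ := fun g => if g = (0,1) ∨ g = (2,0) then 1/10 else 2/5

lemma Gw_card : Gw.card = 4 := by
  simp only [Gw]
  norm_num [Finset.card_insert_of_notMem, Prod.ext_iff]

lemma log_ten : Real.log 10 = Real.log 2 + Real.log 5 := by
  rw [show (10:ℝ) = 2 * 5 by norm_num, Real.log_mul (by norm_num) (by norm_num)]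

lemma log_inv_ten : Real.log (1/10) = -(Real.log 2 + Real.log 5) := by
  rw [one_div, Real.log_inv, log_ten]

lemma log_two_fifths : Real.log (2/5) = Real.log 2 - Real.log 5 := by
  rw [Real.log_div (by norm_num) (by norm_num)]

lemma log_four_fifths : Real.log (4/5) = 2 * Real.log 2 - Real.log 5 := by
  rw [Real.log_div (by norm_num) (by norm_num), show (4:ℝ) = 2^2 by norm_num,
    Real.log_pow]
  push_cast; ring

lemma log_half : Real.log (1/2) = -Real.log 2 := by
  rw [one_div, Real.log_inv]

lemma log_quarter : Real.log (1/4) = -(2 * Real.log 2) := by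
  rw [one_div, Real.log_inv, show (4:ℝ) = 2^2 by norm_num, Real.log_pow]
  push_cast; ring

lemma ent_Pw : ent Gw Pw = Real.log 5 - (3/5) * Real.log 2 := by
  simp only [ent, Gw, Pw]
  rw [Finset.sum_insert (by norm_num [Prod.ext_iff]),
    Finset.sum_insert (by norm_num [Prod.ext_iff]),
    Finset.sum_insert (by norm_num [Prod.ext_iff]), Finset.sum_singleton]
  norm_num [Prod.ext_iff, log_inv_ten, log_two_fifths]
  ring

lemma sum_Pw : ∑ g ∈ Gw, Pw g = 1 := by
  simp only [Gw, Pw]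
  rw [Finset.sum_insert (by norm_num [Prod.ext_iff]),
    Finset.sum_insert (by norm_num [Prod.ext_iff]),
    Finset.sum_insert (by norm_num [Prod.ext_iff]), Finset.sum_singleton]
  norm_num [Prod.ext_iff]

lemma img0 : Gw.image π₀ = ({0,1,2} : Finset ℝ) := by
  ext x; simp [Gw, π₀, Prod.ext_iff]

lemma img1 : Gw.image π₁ = ({1,2} : Finset ℝ) := by
  ext x; simp [Gw, π₁, Prod.ext_iff]; norm_num

lemma imginf : Gw.image πinf = ({1,0} : Finset ℝ) := by
  ext x; simp [Gw, πinf, Prod.ext_iff]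

lemma push0_Pw : pushEnt Gw Pw π₀ = Real.log 5 - (7/5) * Real.log 2 := by
  rw [pushEnt, img0]
  simp only [Finset.sum_filter, Gw]
  norm_num [Finset.sum_insert, Prod.ext_iff, Pw, π₀, log_inv_ten, log_four_fifths]
  ring

lemma push1_Pw : pushEnt Gw Pw π₁ = Real.log 2 := by
  rw [pushEnt, img1]
  simp only [Finset.sum_filter, Gw]
  norm_num [Finset.sum_insert, Prod.ext_iff, Pw, π₁, log_half]
  ring

lemma pushinf_Pw : pushEnt Gw Pw πinf = Real.log 2 := by
  rw [pushEnt, imginf]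
  simp only [Finset.sum_filter, Gw]
  norm_num [Finset.sum_insert, Prod.ext_iff, Pw, πinf, log_half]
  ring

lemma ent_U : ent Gw (fun _ => (1:ℝ)/4) = 2 * Real.log 2 := by
  simp only [ent, Gw]
  rw [Finset.sum_insert (by norm_num [Prod.ext_iff]),
    Finset.sum_insert (by norm_num [Prod.ext_iff]),
    Finset.sum_insert (by norm_num [Prod.ext_iff]), Finset.sum_singleton]
  rw [log_quarter]; ring

lemma push0_U : pushEnt Gw (fun _ => (1:ℝ)/4) π₀ = (3/2) * Real.log 2 := by
  rw [pushEnt, img0]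
  simp only [Finset.sum_filter, Gw]
  norm_num [Finset.sum_insert, Prod.ext_iff, π₀, log_quarter, log_half]
  ring

lemma push1_U : pushEnt Gw (fun _ => (1:ℝ)/4) π₁ = Real.log 2 := by
  rw [pushEnt, img1]
  simp only [Finset.sum_filter, Gw]
  norm_num [Finset.sum_insert, Prod.ext_iff, π₁, log_half]
  ring

lemma pushinf_U : pushEnt Gw (fun _ => (1:ℝ)/4) πinf = Real.log 2 := by
  rw [pushEnt, imginf]
  simp only [Finset.sum_filter, Gw]
  norm_num [Finset.sum_insert, Prod.ext_iff, πinf, log_half]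
  ring

theorem nonuniform_beats_uniform :
    ∃ (G : Finset (ℝ × ℝ)) (P : ℝ × ℝ → ℝ),
      Set.InjOn (fun x : ℝ × ℝ => x.1 - x.2) (G : Set (ℝ × ℝ)) ∧
      (∀ g ∈ G, 0 ≤ P g) ∧ (∑ g ∈ G, P g = 1) ∧
      (¬ ∀ g ∈ G, P g = 1 / G.card) ∧
      ent G P / max (max (pushEnt G P π₀) (pushEnt G P π₁)) (pushEnt G P πinf)
        > ent G (fun _ => 1 / G.card) /
            max (max (pushEnt G (fun _ => 1 / G.card) π₀)
              (pushEnt G (fun _ => 1 / G.card) π₁))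
              (pushEnt G (fun _ => 1 / G.card) πinf) := by
  refine ⟨Gw, Pw, ?_, ?_, sum_Pw, ?_, ?_⟩
  · rintro ⟨a, b⟩ hx ⟨c, d⟩ hy h
    simp only [Gw, coe_insert, Set.mem_insert_iff, coe_singleton,
      Set.mem_singleton_iff, Prod.mk.injEq] at hx hy
    obtain ⟨rfl, rfl⟩|⟨rfl, rfl⟩|⟨rfl, rfl⟩|⟨rfl, rfl⟩ := hx <;>
      obtain ⟨rfl, rfl⟩|⟨rfl, rfl⟩|⟨rfl, rfl⟩|⟨rfl, rfl⟩ := hy <;>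
      norm_num at h <;> norm_num
  · intro g hg
    simp only [Pw]
    split <;> norm_num
  · intro hall
    have := hall (0, 1) (by simp [Gw])
    rw [Gw_card] at this
    simp only [Pw] at this
    norm_num at this
  · have hU : (fun _ : ℝ × ℝ => 1 / (Gw.card : ℝ)) = fun _ => (1:ℝ)/4 := by
      rw [Gw_card]; norm_num
    rw [hU, ent_Pw, push0_Pw, push1_Pw, pushinf_Pw, ent_U, push0_U, push1_U, pushinf_U]
    have hL2 : (0:ℝ) < Real.log 2 := Real.log_pos (by norm_num)
    have hlt1 : 5 * Real.log 5 < 12 * Real.log 2 := by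
      have h := Real.log_lt_log (by norm_num : (0:ℝ) < 3125)
        (by norm_num : (3125:ℝ) < 4096)
      rw [show (3125:ℝ) = 5^5 by norm_num, show (4096:ℝ) = 2^12 by norm_num,
        Real.log_pow, Real.log_pow] at h
      push_cast at h; linarith
    have hlt2 : 29 * Real.log 2 < 15 * Real.log 5 := by
      have h := Real.log_lt_log (by norm_num : (0:ℝ) < 536870912)
        (by norm_num : (536870912:ℝ) < 30517578125)
      rw [show (536870912:ℝ) = 2^29 by norm_num,
        show (30517578125:ℝ) = 5^15 by norm_num, Real.log_pow, Real.log_pow] at h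
      push_cast at h; linarith
    rw [max_eq_right (max_le (by linarith) le_rfl),
      max_eq_left (le_max_of_le_left (by linarith)), max_eq_left (by linarith)]
    rw [gt_iff_lt, div_lt_div_iff₀ (by linarith) hL2]
    nlinarith [hL2, hlt2]
end
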